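/- Let α > 2, r = ⌈α⌉, s ≥ 3 and t positive integers with μ^s(0) = x00y, |x| = t, and 2 < r − t/2^s < α. If 00v ∈ 𝓛 is α-power-free, then δ^t μ^s(0^r v) is α-power-free. -/

import Mathlib

set_option linter.deprecated false
set_option linter.unusedVariables false

/-- Thue–Morse morphism: 0 ↦ 01, 1 ↦ 10 (false = 0, true = 1). -/
def mu : List Bool → List Bool :=
  fun w => w.flatMap (fun b => if b then [true, false] else [false, true])

/-- `w` has period `p`: `w[i] = w[i+p]` whenever both defined. -/
def HasPeriod (w : List Bool) (p : ℕ) : Prop :=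
  ∀ i, i + p < w.length → w[i]? = w[i + p]?

/-- `w` is α-power-free: no factor `u` has a period `p` with `|u|/p ≥ α`. -/
def PowerFree (α : ℝ) (w : List Bool) : Prop :=
  ∀ u p, u <:+: w → 0 < p → HasPeriod u p → (u.length : ℝ) / p < α

/-- `𝓛`: factors of images of `mu`. -/
def InL (w : List Bool) : Prop := ∃ x, w <:+: mu x

def PeriodOn (w : List Bool) (i j p : ℕ) : Prop :=
  ∀ k, i ≤ k → k + p < j → w[k]? = w[k + p]?

lemma mu_nil : mu [] = [] := rfl

lemma mu_cons (b : Bool) (w : List Bool) : mu (b :: w) = b :: (!b) :: mu w := by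
  cases b <;> simp [mu]

lemma mu_length (w : List Bool) : (mu w).length = 2 * w.length := by
  induction w with
  | nil => rfl
  | cons b w ih => rw [mu_cons]; simp [ih]; omega

lemma mu_append (x y : List Bool) : mu (x ++ y) = mu x ++ mu y := by
  simp [mu]

lemma mu_iter_append (s : ℕ) (x y : List Bool) :
    mu^[s] (x ++ y) = mu^[s] x ++ mu^[s] y := by
  induction s with
  | zero => simp
  | succ s ih => simp [Function.iterate_succ_apply', ih, mu_append]

lemma mu_iter_length (s : ℕ) (w : List Bool) : (mu^[s] w).length = 2^s * w.length := by
  induction s with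
  | zero => simp
  | succ s ih => rw [Function.iterate_succ_apply', mu_length, ih, pow_succ]; ring

lemma mu_get_even (z : List Bool) : ∀ k, (mu z)[2*k]? = z[k]? := by
  induction z with
  | nil => intro k; simp [mu_nil]
  | cons b z ih =>
    intro k
    cases k with
    | zero => simp [mu_cons]
    | succ k =>
      rw [mu_cons, show 2*(k+1) = (2*k)+1+1 from by ring]
      simp only [List.getElem?_cons_succ]
      exact ih k

lemma mu_get_odd (z : List Bool) : ∀ k, (mu z)[2*k+1]? = (z[k]?).map (fun b => !b) := by
  induction z with
  | nil => intro k; simp [mu_nil]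
  | cons b z ih =>
    intro k
    cases k with
    | zero => simp [mu_cons]
    | succ k =>
      rw [mu_cons, show 2*(k+1)+1 = ((2*k)+1)+1+1 from by ring]
      simp only [List.getElem?_cons_succ]
      exact ih k

lemma mu_no_even_pair (z : List Bool) (k : ℕ) (b : Bool)
    (h0 : (mu z)[2*k]? = some b) (h1 : (mu z)[2*k+1]? = some b) : False := by
  rw [mu_get_even] at h0
  rw [mu_get_odd, h0] at h1
  simp at h1

lemma mu_pair_odd (z : List Bool) (n : ℕ) (b : Bool)
    (h0 : (mu z)[n]? = some b) (h1 : (mu z)[n+1]? = some b) : n % 2 = 1 := by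
  rcases Nat.even_or_odd n with ⟨k, hk⟩ | hodd
  · exfalso
    apply mu_no_even_pair z k b
    · rw [show 2*k = n from by omega]; exact h0
    · rw [show 2*k+1 = n+1 from by omega]; exact h1
  · exact Nat.odd_iff.mp hodd

lemma no_triple {w : List Bool} (h : InL w) (m : ℕ) (b : Bool)
    (h0 : w[m]? = some b) (h1 : w[m+1]? = some b) (h2 : w[m+2]? = some b) : False := by
  obtain ⟨x, pre, suf, heq⟩ := h
  have hg : ∀ n b', w[n]? = some b' → (mu x)[pre.length + n]? = some b' := by
    intro n b' hn
    have hlt : n < w.length := by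
      by_contra hge
      rw [(getElem?_eq_none_iff (c := w) (i := n)).mpr (by omega)] at hn
      cases hn
    rw [← heq, List.append_assoc, List.getElem?_append_right (by omega),
      Nat.add_sub_cancel_left, List.getElem?_append_left hlt]
    exact hn
  have o1 := mu_pair_odd x (pre.length + m) b (hg m b h0)
    (by rw [show pre.length + m + 1 = pre.length + (m+1) from by omega]; exact hg (m+1) b h1)
  have o2 := mu_pair_odd x (pre.length + m + 1) b
    (by rw [show pre.length + m + 1 = pre.length + (m+1) from by omega]; exact hg (m+1) b h1)
    (by rw [show pre.length + m + 1 + 1 = pre.length + (m+2) from by omega]; exact hg (m+2) b h2)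
  omega

lemma odd_period_false (z : List Bool) (i j p : ℕ) (hodd : p % 2 = 1)
    (hj : j ≤ (mu z).length) (hlen : 2*p + i < j) (hP : PeriodOn (mu z) i j p) : False := by
  have hsome : ∀ k, k < j → ∃ b, (mu z)[k]? = some b := by
    intro k hk
    cases hg : (mu z)[k]? with
    | none => rw [getElem?_eq_none_iff] at hg; omega
    | some b => exact ⟨b, rfl⟩
  by_cases hpair : ∃ m, i ≤ m ∧ m + 1 < j ∧ (mu z)[m]? = (mu z)[m+1]?
  · obtain ⟨m, hm1, hm2, hm3⟩ := hpair
    obtain ⟨b, hb⟩ := hsome m (by omega)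
    have hb' : (mu z)[m+1]? = some b := by rw [← hm3]; exact hb
    have hmodd : m % 2 = 1 := mu_pair_odd z m b hb hb'
    by_cases hc : m + p + 1 < j
    · have e1 : (mu z)[m+p]? = some b := by
        rw [← hP m hm1 (by omega)]; exact hb
      have e2 : (mu z)[m+p+1]? = some b := by
        have h := hP (m+1) (by omega) (by omega)
        rw [show m+1+p = m+p+1 from by omega] at h
        rw [← h]; exact hb'
      have := mu_pair_odd z (m+p) b e1 e2
      omega
    · have hmp : p ≤ m := by omega
      have e1 : (mu z)[m-p]? = some b := by
        have h := hP (m-p) (by omega) (by omega)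
        rw [show m-p+p = m from by omega] at h
        rw [h]; exact hb
      have e2 : (mu z)[m-p+1]? = some b := by
        have h := hP (m-p+1) (by omega) (by omega)
        rw [show m-p+1+p = m+1 from by omega] at h
        rw [h]; exact hb'
      have := mu_pair_odd z (m-p) b e1 e2
      omega
  · push_neg at hpair
    obtain ⟨b0, hb0⟩ := hsome i (by omega)
    have step : ∀ k, i ≤ k → k + 1 < j → ∀ c, (mu z)[k]? = some c →
        (mu z)[k+1]? = some (!c) := by
      intro k hk1 hk2 c hc
      obtain ⟨c', hc'⟩ := hsome (k+1) (by omega)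
      have hne := hpair k hk1 hk2
      rw [hc, hc'] at hne
      rw [hc']
      cases c <;> cases c' <;> simp_all
    have main : ∀ n, i + n < j → (mu z)[i+n]? = some (if n % 2 = 0 then b0 else !b0) := by
      intro n
      induction n with
      | zero => intro _; simpa using hb0
      | succ n ih =>
        intro hn
        have h1 := ih (by omega)
        have h2 := step (i+n) (by omega) (by omega) _ h1
        rw [show i+(n+1) = (i+n)+1 from by omega, h2]
        rcases Nat.mod_two_eq_zero_or_one n with h | h <;>
          simp [h, Nat.succ_mod_two_eq_one_iff, Nat.succ_mod_two_eq_zero_iff]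
    have hA := main p (by omega)
    have hper := hP i le_rfl (by omega)
    rw [hb0, hA, hodd] at hper
    simp at hper

lemma halve (z : List Bool) (i j q : ℕ) (hlen : 2*q + i < j)
    (hP : PeriodOn (mu z) i j (2*q)) : PeriodOn z (i/2) ((j+1)/2) q := by
  intro k hk1 hk2
  by_cases hc : i ≤ 2*k
  · have h := hP (2*k) hc (by omega)
    rw [show 2*k + 2*q = 2*(k+q) from by ring] at h
    rw [mu_get_even, mu_get_even] at h
    exact h
  · have h := hP (2*k+1) (by omega) (by omega)
    rw [show 2*k+1+2*q = 2*(k+q)+1 from by ring] at h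
    rw [mu_get_odd, mu_get_odd] at h
    cases h1 : z[k]? <;> cases h2 : z[k+q]? <;> rw [h1, h2] at h <;> simp_all

lemma iter_down (s : ℕ) (z : List Bool) : ∀ i j p, 1 ≤ p → 2*p + i < j →
    j ≤ (mu^[s] z).length → PeriodOn (mu^[s] z) i j p →
    ∃ p' i' j', p = 2^s * p' ∧ 1 ≤ p' ∧ 2^s * i' ≤ i ∧ i < 2^s * (i' + 1) ∧ j ≤ 2^s * j' ∧
      j' ≤ z.length ∧ 2*p' + i' < j' ∧ PeriodOn z i' j' p' := by
  induction s with
  | zero =>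
    intro i j p h1 h2 h3 h4
    exact ⟨p, i, j, by simp, h1, by simp, by simp, by simp, by simpa using h3, h2, by simpa using h4⟩
  | succ s ih =>
    intro i j p h1 h2 h3 h4
    rw [Function.iterate_succ_apply'] at h3 h4
    have hje : j ≤ 2 * (mu^[s] z).length := by rw [mu_length] at h3; exact h3
    have hpe : p % 2 = 0 := by
      by_contra hne
      exact odd_period_false (mu^[s] z) i j p (by omega) h3 (by omega) h4
    obtain ⟨q, hq⟩ : ∃ q, p = 2*q := ⟨p/2, by omega⟩
    have hq1 : 1 ≤ q := by omega
    have h5 : PeriodOn (mu^[s] z) (i/2) ((j+1)/2) q := by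
      rw [hq] at h4
      exact halve _ i j q (by omega) h4
    obtain ⟨p', i', j', e1, e2, e3, e4, e5, e6, e7, e8⟩ :=
      ih (i/2) ((j+1)/2) q hq1 (by omega) (by omega) h5
    refine ⟨p', i', j', ?_, e2, ?_, ?_, ?_, e6, e7, e8⟩
    · rw [hq, e1, pow_succ]; ring
    · have h := mul_le_mul_right e3 2
      calc 2^(s+1)*i' = 2*(2^s*i') := by rw [pow_succ]; ring
        _ ≤ 2*(i/2) := h
        _ ≤ i := by omega
    · have h := mul_le_mul_right (show i/2 + 1 ≤ 2^s*(i'+1) from e4) 2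
      calc i ≤ 2*(i/2) + 1 := by omega
        _ < 2*(i/2+1) := by omega
        _ ≤ 2*(2^s*(i'+1)) := h
        _ = 2^(s+1)*(i'+1) := by rw [pow_succ]; ring
    · have h := mul_le_mul_right e5 2
      calc j ≤ 2*((j+1)/2) := by omega
        _ ≤ 2*(2^s*j') := h
        _ = 2^(s+1)*j' := by rw [pow_succ]; ring

lemma pref_mod (s : ℕ) : ∀ (r : ℕ) (v : List Bool) (k : ℕ), k < r * 2^s →
    (mu^[s] (List.replicate r false ++ v))[k]? = (mu^[s] [false])[k % 2^s]? := by
  intro r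
  induction r with
  | zero => intro v k hk; omega
  | succ r ih =>
    intro v k hk
    have hrep : List.replicate (r+1) false ++ v = [false] ++ (List.replicate r false ++ v) := by
      simp [List.replicate_succ]
    rw [hrep, mu_iter_append]
    have hC : (mu^[s] [false]).length = 2^s := by rw [mu_iter_length]; simp
    by_cases hc : k < 2^s
    · rw [List.getElem?_append_left (by omega), Nat.mod_eq_of_lt hc]
    · rw [List.getElem?_append_right (by omega), hC]
      have hsum : (r+1) * 2^s = r * 2^s + 2^s := by ring
      have hk' : k - 2^s < r * 2^s := by omega
      have hmod : (k - 2^s) % 2^s = k % 2^s := (Nat.mod_eq_sub_mod (by omega)).symm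
      rw [ih v (k - 2^s) hk', hmod]

lemma pref_period (s r : ℕ) (v : List Bool) :
    PeriodOn (mu^[s] (List.replicate r false ++ v)) 0 (r * 2^s) (2^s) := by
  intro k _ hk
  have hpos : 0 < 2^s := Nat.two_pow_pos s
  rw [pref_mod s r v k (by omega), pref_mod s r v (k + 2^s) hk, Nat.add_mod_right]

lemma Zget_lt (r : ℕ) (v : List Bool) (k : ℕ) (h : k < r) :
    (List.replicate r false ++ v)[k]? = some false := by
  have h1 : k < (List.replicate r false).length := by simpa using h
  rw [List.getElem?_append_left h1]
  simp [h]

lemma Zget_ge (r : ℕ) (v : List Bool) (k : ℕ) (h : r ≤ k) :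
    (List.replicate r false ++ v)[k]? = v[k - r]? := by
  rw [List.getElem?_append_right (by simpa using h)]
  simp

set_option maxHeartbeats 1000000 in
theorem lemma5_part3 (α : ℝ) (hα : 2 < α) (r s t : ℕ) (hr : r = ⌈α⌉₊)
    (hs : 3 ≤ s) (ht : 0 < t) (x y : List Bool)
    (hx : mu^[s] [false] = x ++ [false, false] ++ y) (hxt : x.length = t)
    (hβ1 : 2 < (r : ℝ) - t / 2 ^ s) (hβ2 : (r : ℝ) - t / 2 ^ s < α)
    (v : List Bool) (hL : InL ([false, false] ++ v))
    (hfree : PowerFree α ([false, false] ++ v)) :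
    PowerFree α ((mu^[s] (List.replicate r false ++ v)).drop t) := by
  intro u p hu hp hper
  by_contra hcon
  push_neg at hcon
  have hp0 : (0:ℝ) < p := by exact_mod_cast hp
  have hαp : α * p ≤ (u.length:ℝ) := by rwa [le_div_iff₀ hp0] at hcon
  have h2p : 2 * p < u.length := by
    have h : (2:ℝ)*p < u.length := by
      nlinarith [mul_pos (show (0:ℝ) < α - 2 by linarith) hp0]
    exact_mod_cast h
  obtain ⟨pre, suf, heq⟩ := hu
  set Z : List Bool := List.replicate r false ++ v with hZdef
  set i : ℕ := t + pre.length with hidef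
  set j : ℕ := i + u.length with hjdef
  have hlen0 := congrArg List.length heq
  simp only [List.length_append, List.length_drop] at hlen0
  have hjW : j ≤ (mu^[s] Z).length := by omega
  have hGET : ∀ m, m < u.length → (mu^[s] Z)[i + m]? = u[m]? := by
    intro m hm
    have h1 : ((mu^[s] Z).drop t)[pre.length + m]?
        = (mu^[s] Z)[t + (pre.length + m)]? := List.getElem?_drop
    have h2 : (pre ++ (u ++ suf))[pre.length + m]? = u[m]? := by
      rw [List.getElem?_append_right (by omega), Nat.add_sub_cancel_left, List.getElem?_append_left hm]
    calc (mu^[s] Z)[i + m]?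
        = ((mu^[s] Z).drop t)[pre.length + m]? := by rw [h1]; congr 1; omega
      _ = (pre ++ (u ++ suf))[pre.length + m]? := by rw [← List.append_assoc, heq]
      _ = u[m]? := h2
  have hPW : PeriodOn (mu^[s] Z) i j p := by
    intro k hk1 hk2
    have e1 := hGET (k - i) (by omega)
    have e2 := hGET (k - i + p) (by omega)
    rw [show i + (k-i) = k from by omega] at e1
    rw [show i + (k-i+p) = k+p from by omega] at e2
    rw [e1, e2]
    exact hper (k-i) (by omega)
  obtain ⟨p', i', j', hpf, hp'1, hi'l, hi'u, hj'u, hj'Z, hlen', hPZ⟩ :=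
    iter_down s Z i j p hp (by omega) hjW hPW
  have hE0 : (0:ℝ) < 2^s := by positivity
  have hp'0 : (0:ℝ) < p' := by exact_mod_cast hp'1
  have hpfR : (p:ℝ) = 2^s * p' := by exact_mod_cast hpf
  have hi'lR : (2:ℝ)^s * i' ≤ i := by exact_mod_cast hi'l
  have hj'uR : (j:ℝ) ≤ 2^s * j' := by exact_mod_cast hj'u
  have huR : (u.length:ℝ) = (j:ℝ) - i := by rw [hjdef]; push_cast; ring
  have hβ2' : (r:ℝ) * 2^s - t < α * 2^s := by
    have h := mul_lt_mul_of_pos_right hβ2 (show (0:ℝ) < 2^s by positivity)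
    rw [sub_mul, div_mul_cancel₀] at h
    · exact h
    · positivity
  have hαp2 : α * ((2:ℝ)^s * p') ≤ u.length := by rw [← hpfR]; exact hαp
  have hZlen : Z.length = r + v.length := by rw [hZdef]; simp
  by_cases hA : j' ≤ r
  · -- Case A : u inside the (2^s)-periodic prefix region
    have hAR : ((j':ℕ):ℝ) ≤ r := by exact_mod_cast hA
    have htiR : (t:ℝ) ≤ i := by exact_mod_cast (show t ≤ i by omega)
    have hp'R : (1:ℝ) ≤ p' := by exact_mod_cast hp'1
    have hα0 : (0:ℝ) ≤ α := by linarith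
    have c1 : (2:ℝ)^s * j' ≤ 2^s * r := mul_le_mul_of_nonneg_left hAR hE0.le
    have c2 : α * (2:ℝ)^s * 1 ≤ α * 2^s * p' :=
      mul_le_mul_of_nonneg_left hp'R (mul_nonneg hα0 hE0.le)
    linarith [hαp2, huR, hj'uR, c1, htiR, hβ2', c2]
  · have hb : r < j' := by omega
    have hvpos : 0 < v.length := by omega
    by_cases hc1 : p' ≤ r - i'
    · -- Case C1 : period fits inside the zero block, hits the boundary 0→1
      obtain ⟨b, hbv⟩ : ∃ b, v[0]? = some b := by
        cases hv : v[0]? with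
        | none => rw [getElem?_eq_none_iff] at hv; omega
        | some b => exact ⟨b, rfl⟩
      cases b with
      | false => exact no_triple hL 0 false rfl rfl hbv
      | true =>
        have hper1 := hPZ (r - p') (by omega) (by omega)
        rw [show r - p' + p' = r from by omega] at hper1
        have hzl := Zget_lt r v (r - p') (by omega)
        have hzr := Zget_ge r v r (le_refl r)
        rw [← hZdef] at hzl hzr
        rw [Nat.sub_self] at hzr
        rw [hzl, hzr, hbv] at hper1
        simp at hper1
    · by_cases ha2 : r ≤ i' + 2
      · -- Case B/C2 : project down to a factor of 00v
        have hij : i' < j' := by omega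
        set d : ℕ := i' + 2 - r with hd
        set u₀ : List Bool := (([false,false] ++ v).drop d).take (j' - i') with hu₀
        have hinf : u₀ <:+: [false,false] ++ v :=
          ((List.take_prefix _ _).isInfix).trans (List.drop_suffix _ _).isInfix
        have hu₀len : u₀.length = j' - i' := by
          rw [hu₀, List.length_take, List.length_drop]
          simp only [List.length_append, List.length_cons, List.length_nil]
          omega
        have CL : ∀ m, m < j' - i' → ([false,false] ++ v)[d + m]? = Z[i' + m]? := by
          intro m hm
          by_cases hcm : i' + m < r
          · have hz := Zget_lt r v (i'+m) hcm
            rw [← hZdef] at hz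
            rw [hz]
            rcases (show d + m = 0 ∨ d + m = 1 by omega) with h | h <;> rw [h] <;> rfl
          · have hz := Zget_ge r v (i'+m) (by omega)
            rw [← hZdef] at hz
            rw [hz, show d + m = (i' + m - r) + 2 from by omega]
            rfl
        have hper₀ : HasPeriod u₀ p' := by
          intro m hm
          rw [hu₀len] at hm
          have g1 : u₀[m]? = ([false,false] ++ v)[d + m]? := by
            rw [hu₀, List.getElem?_take_of_lt (by omega), List.getElem?_drop]
          have g2 : u₀[m + p']? = ([false,false] ++ v)[d + (m + p')]? := by
            rw [hu₀, List.getElem?_take_of_lt (by omega), List.getElem?_drop]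
          rw [g1, g2, CL m (by omega), CL (m+p') (by omega)]
          have h := hPZ (i' + m) (by omega) (by omega)
          rw [show i' + m + p' = i' + (m + p') from by omega] at h
          exact h
        have hcontra := hfree u₀ p' hinf (by omega) hper₀
        rw [hu₀len] at hcontra
        rw [Nat.cast_sub (le_of_lt hij), div_lt_iff₀ hp'0] at hcontra
        have c3 : (2:ℝ)^s * ((j':ℝ) - i') < 2^s * (α * p') :=
          mul_lt_mul_of_pos_left hcontra hE0
        linarith [hαp2, huR, hj'uR, hi'lR, c3]
      · -- Case C3 : long zero run maps forward into mu^[s](v): get aaa, contradiction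
        have hap : r - i' < p' := by omega
        have m1 : 2^s * (r - i' + 1) ≤ 2^s * p' := mul_le_mul_right (by omega) _
        have m2 : 2^s * i' + 2^s * (r - i' + 1) = 2^s * (r + 1) := by
          rw [← Nat.mul_add]; congr 1; omega
        have hip : 2^s * (r + 1) ≤ i + p := by
          rw [← m2]; exact Nat.add_le_add hi'l (hpf ▸ m1)
        have hriR : ((r:ℝ) - i') + 1 ≤ p' := by
          have h : ((r - i' + 1 : ℕ):ℝ) ≤ p' := by exact_mod_cast hap
          rw [Nat.cast_add, Nat.cast_sub (show i' ≤ r by omega)] at h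
          push_cast at h
          linarith
        have e0' : (r:ℝ) - i' ≤ (α - 1) * p' := by nlinarith
        have e1 : (2:ℝ)^s * ((r:ℝ) - i') ≤ 2^s * ((α - 1) * p') :=
          mul_le_mul_of_nonneg_left e0' hE0.le
        have hjR : (j:ℝ) = (i:ℝ) + u.length := by push_cast [hjdef]; ring
        have hjrpR : (r:ℝ) * 2^s + p ≤ j := by
          rw [hpfR]; linarith [hαp2, hi'lR, e1, hjR]
        have hjrp : r * 2^s + p ≤ j := by exact_mod_cast hjrpR
        have hirp : i ≤ r * 2^s := by
          have h := mul_le_mul_right (show i' + 1 ≤ r from by omega) (2^s)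
          calc i ≤ 2^s * (i'+1) := le_of_lt hi'u
            _ ≤ 2^s * r := h
            _ = r * 2^s := Nat.mul_comm _ _
        have hps : 0 < 2^s := Nat.two_pow_pos s
        have hp2s : 2^s ≤ p := by
          rw [hpf]; exact Nat.le_mul_of_pos_right (2^s) hp'1
        have hG : PeriodOn (mu^[s] Z) (i + p) (r * 2^s + p) (2^s) := by
          intro k hk1 hk2
          have hpk : p ≤ k := by omega
          have s1 := hPW (k - p) (by omega) (by omega)
          rw [show k - p + p = k from by omega] at s1
          have s2 := hPW (k + 2^s - p) (by omega) (by omega)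
          rw [show k + 2^s - p + p = k + 2^s from by omega] at s2
          have s3 := pref_period s r v (k - p) (Nat.zero_le _) (by omega)
          rw [← hZdef] at s3
          rw [show k - p + 2^s = k + 2^s - p from by omega] at s3
          rw [← s1, s3, s2]
        have hcond : 2*2^s + (i+p) < r*2^s + p := by
          have m4 : 2^s * (i'+3) ≤ 2^s * r := mul_le_mul_right (by omega) _
          have m5 : 2^s * (i'+3) = 2^s * (i'+1) + 2 * 2^s := by ring
          have hcomm : r * 2^s = 2^s * r := by ring
          omega
        obtain ⟨q', i₂, j₂, hqf, hq1, hi₂l, hi₂u, hj₂u, hj₂Z, hlen₂, hPZ₂⟩ :=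
          iter_down s Z (i+p) (r*2^s+p) (2^s) (Nat.two_pow_pos s) hcond
            (le_trans hjrp hjW) hG
        have hq'1 : q' = 1 := by
          by_contra hne
          have h2q : 2 ≤ q' := by omega
          have h := mul_le_mul_right h2q (2^s)
          have hps : 0 < 2^s := Nat.two_pow_pos s
          omega
        subst hq'1
        have hi₂r : r + 1 ≤ i₂ := by
          have h := lt_of_le_of_lt hip hi₂u
          exact Nat.le_of_lt_succ (Nat.lt_of_mul_lt_mul_left h)
        obtain ⟨b, hb2⟩ : ∃ b, Z[i₂]? = some b := by
          cases hv : Z[i₂]? with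
          | none => rw [getElem?_eq_none_iff] at hv; omega
          | some b => exact ⟨b, rfl⟩
        have e1' := hPZ₂ i₂ le_rfl (by omega)
        have e2' := hPZ₂ (i₂+1) (by omega) (by omega)
        have hz0 := Zget_ge r v i₂ (by omega)
        have hz1 := Zget_ge r v (i₂+1) (by omega)
        have hz2 := Zget_ge r v (i₂+1+1) (by omega)
        rw [← hZdef] at hz0 hz1 hz2
        have f0 : ([false,false] ++ v)[(i₂ - r) + 2]? = some b := by
          show v[i₂ - r]? = some b
          rw [← hz0]; exact hb2
        have f1 : ([false,false] ++ v)[(i₂ - r) + 2 + 1]? = some b := by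
          rw [show (i₂ - r) + 2 + 1 = (i₂ + 1 - r) + 2 from by omega]
          show v[i₂ + 1 - r]? = some b
          rw [← hz1, ← e1']; exact hb2
        have f2 : ([false,false] ++ v)[(i₂ - r) + 2 + 2]? = some b := by
          rw [show (i₂ - r) + 2 + 2 = (i₂ + 1 + 1 - r) + 2 from by omega]
          show v[i₂ + 1 + 1 - r]? = some b
          rw [← hz2, ← e2', ← e1']; exact hb2
        exact no_triple hL ((i₂ - r) + 2) b f0 f1 f2
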